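/- Let E be a regular (a,b)-module and k = or(E) its regularity order, i.e. the smallest k with a^{k+1}·E ⊆ Σ_{j=0}^{k} aʲ·b^{k−j+1}·E. Then Φ_k(E) := Σ_{j=0}^{k} (b⁻¹a)ʲ·E is stable under b⁻¹·a, is a simple-pole (a,b)-module contained in b^{−k}·E, and equals the saturation E^♯. In particular δ(E) ≤ or(E), where δ(E) is the smallest m with E^♯ ⊆ b^{−m}·E. -/
import Mathlib


set_option synthInstance.maxHeartbeats 1000000
set_option maxHeartbeats 1000000

open PowerSeries

noncomputable section

/-- `ℂ[[b]]`. -/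
abbrev Rb := PowerSeries ℂ

variable {E : Type} [AddCommGroup E] [Module Rb E]
  [Module ℂ E] [IsScalarTower ℂ Rb E]

/-- Multiplication by `bⁿ`, i.e. the submodule `bⁿ·G` of a `ℂ[[b]]`-module. -/
def bpow (n : ℕ) (G : Submodule Rb E) : Submodule Rb E :=
  (Ideal.span {(X : Rb) ^ n}) • G

/-- The operator `b` (multiplication by `X`) as a `ℂ`-linear endomorphism. -/
def bop : E →ₗ[ℂ] E := (LinearMap.lsmul Rb E (X : Rb)).restrictScalars ℂ

/-- An (a,b)-module structure: `E` is a free finite-rank `ℂ[[b]]`-module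
and `a` is a `ℂ`-linear, `b`-adically continuous endomorphism with
`a·b − b·a = b²`; equivalently, `a(S·x) = S·a(x) + b²·S'(b)·x` for all
`S ∈ ℂ[[b]]`. -/
def IsABMod (a : E →ₗ[ℂ] E) : Prop :=
  ∀ (S : Rb) (x : E), a (S • x) = S • a x + ((X : Rb) ^ 2 * derivative ℂ S) • x

/-- The operators `Tⱼ = bʲ·(b⁻¹a)ʲ`, defined recursively by `T₀ = id`,
`T_{j+1} = (a − j·b)∘Tⱼ`. -/
def Tj (a : E →ₗ[ℂ] E) : ℕ → (E →ₗ[ℂ] E)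
  | 0 => LinearMap.id
  | (j + 1) => (a - (j : ℂ) • bop) ∘ₗ Tj a j

/-- The `ℂ`-subspace `Σ_{j=0}^{k} aʲ·b^{k−j+1}·E`. -/
def Psi (a : E →ₗ[ℂ] E) (k : ℕ) : Submodule ℂ E :=
  ⨆ j ∈ Finset.range (k + 1),
    Submodule.map (a ^ j) ((bpow (k - j + 1) ⊤).restrictScalars ℂ)

/-- The regularity condition `a^{k+1}·E ⊆ Σ_{j=0}^{k} aʲ·b^{k−j+1}·E`. -/
def RegCond (a : E →ₗ[ℂ] E) (k : ℕ) : Prop :=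
  ∀ x : E, (a ^ (k + 1)) x ∈ Psi a k

/-- `E` is regular (equivalently: some regularity condition holds). -/
def IsRegularAB (a : E →ₗ[ℂ] E) : Prop := ∃ k, RegCond a k

/-- The regularity order `or(E)`. -/
def regOrder (a : E →ₗ[ℂ] E) : ℕ := sInf {k | RegCond a k}

/-- `b^k·E^♯ = b^k·Φ_k(E) = Σ_{j=0}^{k} b^{k−j}·Tⱼ(E)`: the saturation
`E^♯ = Σ_j (b⁻¹a)ʲ·E` of `E`, renormalized by `b^k` so as to live inside `E`. -/
def Wsat (a : E →ₗ[ℂ] E) (k : ℕ) : Submodule Rb E :=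
  Submodule.span Rb
    (⋃ j ∈ Finset.range (k + 1), Set.range fun x : E => ((X : Rb) ^ (k - j)) • (Tj a j x))

/-- A submodule `G ⊆ E` is a simple-pole submodule when `a·G ⊆ b·G`. -/
def SimplePoleSub (a : E →ₗ[ℂ] E) (G : Submodule Rb E) : Prop :=
  ∀ x ∈ G, a x ∈ bpow 1 G

/-- The index `δ(E)`: the smallest `m` with `E^♯ ⊆ b^{−m}·E`,
i.e. `bᵐ·E^♯ ⊆ E`, i.e. `bᵐ·(b^k·E^♯) ⊆ b^k·E` for `k = or(E)`. -/
def deltaIdx (a : E →ₗ[ℂ] E) : ℕ :=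
  sInf {m | bpow m (Wsat a (regOrder a)) ≤ bpow (regOrder a) ⊤}

/-- The biggest simple-pole submodule `E^b` of `E`. -/
def Eb (a : E →ₗ[ℂ] E) : Submodule Rb E := sSup {G | SimplePoleSub a G}

/- ### Auxiliary lemmas -/

section aux

open Pointwise

variable (a : E →ₗ[ℂ] E)

lemma comm_lemma (ha : IsABMod a) (n : ℕ) (y : E) :
    a ((X:Rb)^n • y) = (X:Rb)^n • a y + (n : ℂ) • ((X:Rb)^(n+1) • y) := by
  rw [ha ((X:Rb)^n) y]
  congr 1
  have hd : ((X:Rb)^2 * (derivative ℂ) ((X:Rb)^n)) = (n:Rb) * (X:Rb)^(n+1) := by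
    cases n with
    | zero => simp
    | succ s =>
      rw [Derivation.leibniz_pow, derivative_X]
      simp only [smul_eq_mul, mul_one, nsmul_eq_mul, Nat.succ_sub_one]
      push_cast
      ring
  rw [hd, mul_smul, Nat.cast_smul_eq_nsmul, Nat.cast_smul_eq_nsmul]

lemma Tj_succ (j : ℕ) (x : E) :
    Tj a (j+1) x = a (Tj a j x) - (j:ℂ) • ((X:Rb) • Tj a j x) := by
  simp [Tj, bop, LinearMap.lsmul_apply]

lemma aTj (ha : IsABMod a) (j n : ℕ) (y : E) :
    a ((X:Rb)^n • Tj a j y)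
      = (X:Rb)^n • Tj a (j+1) y + ((n + j : ℕ) : ℂ) • ((X:Rb)^(n+1) • Tj a j y) := by
  rw [comm_lemma a ha, Tj_succ, smul_sub]
  have h1 : (X:Rb)^n • ((j:ℂ) • ((X:Rb) • Tj a j y)) = (j:ℂ) • ((X:Rb)^(n+1) • Tj a j y) := by
    rw [smul_comm, smul_smul, ← pow_succ]
  rw [h1, Nat.cast_add, add_smul]
  abel

lemma csmul_mem {G : Submodule Rb E} {y : E} (c : ℂ) (hy : y ∈ G) : c • y ∈ G := by
  rw [← algebraMap_smul Rb c y]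
  exact G.smul_mem _ hy

lemma mem_bpow_of_eq {G : Submodule Rb E} {n : ℕ} {g y : E} (hg : g ∈ G)
    (hy : y = (X:Rb)^n • g) : y ∈ bpow n G := by
  rw [hy, bpow]
  exact Submodule.smul_mem_smul (Ideal.subset_span rfl) hg

lemma bpow_ex {G : Submodule Rb E} {n : ℕ} {y : E} (h : y ∈ bpow n G) :
    ∃ g ∈ G, y = (X:Rb)^n • g := by
  rw [bpow, Submodule.ideal_span_singleton_smul, ← SetLike.mem_coe,
    Submodule.coe_pointwise_smul] at h
  obtain ⟨g, hg, rfl⟩ := h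
  exact ⟨g, hg, rfl⟩

lemma bpow_le' {N P : Submodule Rb E} {m : ℕ}
    (h : ∀ y ∈ N, (X:Rb)^m • y ∈ P) : bpow m N ≤ P := by
  rw [bpow]
  refine Submodule.smul_le.mpr fun r hr n hn => ?_
  obtain ⟨c, rfl⟩ := Ideal.mem_span_singleton.mp hr
  rw [mul_comm, mul_smul]
  exact P.smul_mem c (h n hn)

lemma mem_W {k j n : ℕ} (hj : j ≤ k) (hn : k - j ≤ n) (x : E) :
    (X:Rb)^n • Tj a j x ∈ Wsat a k := by
  have h1 : (X:Rb)^(k-j) • Tj a j x ∈ Wsat a k := by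
    apply Submodule.subset_span
    simp only [Set.mem_iUnion]
    exact ⟨j, Finset.mem_range.mpr (Nat.lt_succ_of_le hj), x, rfl⟩
  have h2 : (X:Rb)^n • Tj a j x = (X:Rb)^(n-(k-j)) • ((X:Rb)^(k-j) • Tj a j x) := by
    rw [smul_smul, ← pow_add]
    congr 2
    omega
  rw [h2]
  exact Submodule.smul_mem _ _ h1

lemma X_smul_mem_bW {k : ℕ} {w : E} (hw : w ∈ Wsat a k) :
    (X:Rb) • w ∈ bpow 1 (Wsat a k) := by
  rw [bpow]
  exact Submodule.smul_mem_smul (Ideal.subset_span (by rw [Set.mem_singleton_iff, pow_one])) hw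

lemma mem_bW {k j n : ℕ} (hj : j ≤ k) (hn : k - j + 1 ≤ n) (x : E) :
    (X:Rb)^n • Tj a j x ∈ bpow 1 (Wsat a k) := by
  have h2 : (X:Rb)^n • Tj a j x = (X:Rb) • ((X:Rb)^(n-1) • Tj a j x) := by
    rw [smul_smul, ← pow_succ']
    congr 2
    omega
  rw [h2]
  exact X_smul_mem_bW a (mem_W a hj (by omega) x)

/-- Correction terms in the expansion of `aⁱ` through the `Tⱼ`. -/
def Sset (a : E →ₗ[ℂ] E) (i : ℕ) : Set E :=
  {z | ∃ n j y, 1 ≤ n ∧ n + j = i ∧ z = (X:Rb)^n • Tj a j y}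

def Sset2 (a : E →ₗ[ℂ] E) (s i : ℕ) : Set E :=
  {z | ∃ n j y, j ≤ i ∧ n + j = s ∧ z = (X:Rb)^n • Tj a j y}

lemma a_span_Sset (ha : IsABMod a) (i : ℕ) :
    ∀ z ∈ Submodule.span ℂ (Sset a i), a z ∈ Submodule.span ℂ (Sset a (i+1)) := by
  intro z hz
  induction hz using Submodule.span_induction with
  | mem z hzm =>
    obtain ⟨n, j, y, hn, hij, rfl⟩ := hzm
    rw [aTj a ha]
    exact add_mem (Submodule.subset_span ⟨n, j+1, y, hn, by omega, rfl⟩)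
      (Submodule.smul_mem _ _ (Submodule.subset_span ⟨n+1, j, y, by omega, by omega, rfl⟩))
  | zero => simp
  | add x y _ _ h1 h2 => rw [map_add]; exact add_mem h1 h2
  | smul c z _ h => rw [map_smul]; exact Submodule.smul_mem _ _ h

lemma a_span_Sset2 (ha : IsABMod a) (s i : ℕ) :
    ∀ z ∈ Submodule.span ℂ (Sset2 a s i), a z ∈ Submodule.span ℂ (Sset2 a (s+1) (i+1)) := by
  intro z hz
  induction hz using Submodule.span_induction with
  | mem z hzm =>
    obtain ⟨n, j, y, hji, hsum, rfl⟩ := hzm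
    rw [aTj a ha]
    exact add_mem (Submodule.subset_span ⟨n, j+1, y, by omega, by omega, rfl⟩)
      (Submodule.smul_mem _ _ (Submodule.subset_span ⟨n+1, j, y, by omega, by omega, rfl⟩))
  | zero => simp
  | add x y _ _ h1 h2 => rw [map_add]; exact add_mem h1 h2
  | smul c z _ h => rw [map_smul]; exact Submodule.smul_mem _ _ h

lemma exp1 (ha : IsABMod a) :
    ∀ (i : ℕ) (x : E), (a^i) x - Tj a i x ∈ Submodule.span ℂ (Sset a i) := by
  intro i
  induction i with
  | zero =>
    intro x
    simp only [pow_zero, Module.End.one_apply, Tj, LinearMap.id_coe, id_eq, sub_self]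
    exact zero_mem _
  | succ i ih =>
    intro x
    have key : (a^(i+1)) x - Tj a (i+1) x
        = a ((a^i) x - Tj a i x) + (i:ℂ) • ((X:Rb)^1 • Tj a i x) := by
      rw [map_sub, Tj_succ, pow_succ', Module.End.mul_apply, pow_one]
      abel
    rw [key]
    exact add_mem (a_span_Sset a ha i _ (ih x))
      (Submodule.smul_mem _ _ (Submodule.subset_span ⟨1, i, x, le_rfl, by omega, rfl⟩))

lemma exp2 (ha : IsABMod a) :
    ∀ (i n : ℕ) (y : E), (a^i) ((X:Rb)^n • y) ∈ Submodule.span ℂ (Sset2 a (n+i) i) := by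
  intro i
  induction i with
  | zero =>
    intro n y
    rw [pow_zero, Module.End.one_apply]
    exact Submodule.subset_span ⟨n, 0, y, le_rfl, by omega, by simp [Tj]⟩
  | succ i ih =>
    intro n y
    have h0 : (a^(i+1)) ((X:Rb)^n • y) = a ((a^i) ((X:Rb)^n • y)) := by
      rw [pow_succ', Module.End.mul_apply]
    rw [h0]
    exact a_span_Sset2 a ha (n+i) i _ (ih n y)

lemma span_Sset2_le (k j : ℕ) (hj : j ≤ k) :
    Submodule.span ℂ (Sset2 a (k+1) j) ≤ (bpow 1 (Wsat a k)).restrictScalars ℂ := by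
  rw [Submodule.span_le]
  rintro z ⟨n', j', y', hj', hsum, rfl⟩
  exact mem_bW a (by omega) (by omega) y'

lemma span_Sset_le (k : ℕ) :
    Submodule.span ℂ (Sset a (k+1)) ≤ (bpow 1 (Wsat a k)).restrictScalars ℂ := by
  rw [Submodule.span_le]
  rintro z ⟨n, j, y, hn, hsum, rfl⟩
  exact mem_bW a (by omega) (by omega) y

lemma Psi_le_bW (ha : IsABMod a) (k : ℕ) :
    Psi a k ≤ (bpow 1 (Wsat a k)).restrictScalars ℂ := by
  rw [Psi]
  refine iSup₂_le fun j hj => ?_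
  have hjk : j ≤ k := by have := Finset.mem_range.mp hj; omega
  intro y hy
  rw [Submodule.mem_map] at hy
  obtain ⟨z, hz, rfl⟩ := hy
  obtain ⟨g, -, rfl⟩ := bpow_ex (show z ∈ bpow (k-j+1) (⊤ : Submodule Rb E) from hz)
  have h2 := exp2 a ha j (k-j+1) g
  have he : k - j + 1 + j = k + 1 := by omega
  rw [he] at h2
  exact span_Sset2_le a k j hjk h2

lemma Tk1 (ha : IsABMod a) (k : ℕ) (hk : RegCond a k) (x : E) :
    Tj a (k+1) x ∈ bpow 1 (Wsat a k) := by
  have h2 : (a^(k+1)) x ∈ (bpow 1 (Wsat a k)).restrictScalars ℂ := Psi_le_bW a ha k (hk x)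
  have h3 : (a^(k+1)) x - Tj a (k+1) x ∈ (bpow 1 (Wsat a k)).restrictScalars ℂ :=
    span_Sset_le a k (exp1 a ha (k+1) x)
  have h4 := sub_mem h2 h3
  simpa using h4

lemma part1 (ha : IsABMod a) (k : ℕ) (hk : RegCond a k) :
    ∀ w ∈ Wsat a k, a w ∈ bpow 1 (Wsat a k) := by
  intro w hw
  induction hw using Submodule.span_induction with
  | mem z hz =>
    simp only [Set.mem_iUnion, Set.mem_range] at hz
    obtain ⟨j, hj, x, rfl⟩ := hz
    have hjk : j ≤ k := by have := Finset.mem_range.mp hj; omega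
    rw [aTj a ha]
    apply add_mem
    · by_cases hjke : j = k
      · subst hjke
        simpa [Nat.sub_self] using Tk1 a ha j hk x
      · exact mem_bW a (j := j+1) (n := k - j) (by omega) (by omega) x
    · exact csmul_mem _ (mem_bW a (n := k - j + 1) hjk le_rfl x)
  | zero => simp
  | add x y _ _ h1 h2 => rw [map_add]; exact add_mem h1 h2
  | smul r z hz h =>
    rw [ha r z]
    apply add_mem
    · exact Submodule.smul_mem _ _ h
    · have he : (X:Rb)^2 * (derivative ℂ) r = (X:Rb) * ((X:Rb) * (derivative ℂ) r) := by ring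
      rw [he, mul_smul]
      exact X_smul_mem_bW a (Submodule.smul_mem _ _ hz)

lemma part2_key (ha : IsABMod a) (m : ℕ) (G : Submodule Rb E)
    (hG1 : bpow m ⊤ ≤ G)
    (hG2 : ∀ g ∈ G, a g - (m : ℂ) • ((X : Rb) • g) ∈ bpow 1 G) :
    ∀ (j : ℕ) (x : E), (X:Rb)^m • Tj a j x ∈ bpow j G := by
  intro j
  induction j with
  | zero =>
    intro x
    have hx : (X:Rb)^m • x ∈ G := hG1 (mem_bpow_of_eq trivial rfl)
    exact mem_bpow_of_eq hx (by simp [Tj])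
  | succ j ih =>
    intro x
    obtain ⟨g, hg, hge⟩ := bpow_ex (ih x)
    have e1 := aTj a ha j m x
    have e2 := comm_lemma a ha j g
    have e3 : (X:Rb)^(m+1) • Tj a j x = (X:Rb)^(j+1) • g := by
      rw [pow_succ', mul_smul, hge, smul_smul, ← pow_succ']
    have key : (X:Rb)^m • Tj a (j+1) x = (X:Rb)^j • (a g - (m:ℂ) • ((X:Rb) • g)) := by
      calc (X:Rb)^m • Tj a (j+1) x
          = a ((X:Rb)^m • Tj a j x) - ((m+j:ℕ):ℂ) • ((X:Rb)^(m+1) • Tj a j x) := by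
            rw [e1]; abel
        _ = a ((X:Rb)^j • g) - ((m+j:ℕ):ℂ) • ((X:Rb)^(j+1) • g) := by rw [hge, e3]
        _ = (X:Rb)^j • a g + (j:ℂ) • ((X:Rb)^(j+1) • g)
              - ((m+j:ℕ):ℂ) • ((X:Rb)^(j+1) • g) := by rw [e2]
        _ = (X:Rb)^j • a g - (m:ℂ) • ((X:Rb)^(j+1) • g) := by
            rw [Nat.cast_add, add_smul]; abel
        _ = (X:Rb)^j • (a g - (m:ℂ) • ((X:Rb) • g)) := by
            have e4 : (X:Rb)^j • ((m:ℂ) • ((X:Rb) • g)) = (m:ℂ) • ((X:Rb)^(j+1) • g) := by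
              rw [smul_comm, smul_smul, ← pow_succ]
            rw [smul_sub, e4]
    obtain ⟨g', hg', hg'e⟩ := bpow_ex (hG2 g hg)
    rw [key, hg'e]
    refine mem_bpow_of_eq hg' ?_
    rw [smul_smul, ← pow_add]

end aux

/-- Let `E` be a regular (a,b)-module of regularity order `k = or(E)`.  Then
`Φ_k(E) := Σ_{j=0}^{k} (b⁻¹a)ʲ·E` is stable under `b⁻¹·a` (it is a simple-pole
(a,b)-module), it is contained in `b^{−k}·E`, and it equals the saturation
`E^♯` (it is contained in every simple-pole module containing `E`).
In particular `δ(E) ≤ or(E)`.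
Everything is stated after renormalization by `b^k`: `Wsat a k = b^k·Φ_k(E)`
is a submodule of `E`, simple-pole-ness of `Φ_k` reads `a·w ∈ b·W` for `w ∈ W`,
a simple-pole module `F` with `E ⊆ F ⊆ E[b⁻¹]` is written `F = b^{−m}·G` with
`G ⊆ E`, `bᵐ·E ⊆ G`, `a·g − m·b·g ∈ b·G`, and minimality reads
`bᵐ·W ⊆ b^k·G`. -/
theorem stmt_7 [Module.Free Rb E] [Module.Finite Rb E]
    (a : E →ₗ[ℂ] E) (ha : IsABMod a) (hreg : IsRegularAB a) :
    (∀ w ∈ Wsat a (regOrder a), a w ∈ bpow 1 (Wsat a (regOrder a))) ∧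
    (∀ (m : ℕ) (G : Submodule Rb E), bpow m ⊤ ≤ G →
        (∀ g ∈ G, a g - (m : ℂ) • ((X : Rb) • g) ∈ bpow 1 G) →
        bpow m (Wsat a (regOrder a)) ≤ bpow (regOrder a) G) ∧
    deltaIdx a ≤ regOrder a := by
  have hk : RegCond a (regOrder a) := Nat.sInf_mem hreg
  set k := regOrder a with hkdef
  refine ⟨part1 a ha k hk, ?_, ?_⟩
  · intro m G hG1 hG2
    apply bpow_le'
    intro w hw
    induction hw using Submodule.span_induction with
    | mem z hz =>
      simp only [Set.mem_iUnion, Set.mem_range] at hz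
      obtain ⟨j, hj, x, rfl⟩ := hz
      have hjk : j ≤ k := by have := Finset.mem_range.mp hj; omega
      obtain ⟨g, hg, hge⟩ := bpow_ex (part2_key a ha m G hG1 hG2 j x)
      refine mem_bpow_of_eq hg ?_
      calc (X:Rb)^m • ((X:Rb)^(k-j) • Tj a j x)
          = (X:Rb)^(k-j) • ((X:Rb)^m • Tj a j x) := by
            rw [smul_smul, smul_smul, mul_comm]
        _ = (X:Rb)^(k-j) • ((X:Rb)^j • g) := by rw [hge]
        _ = (X:Rb)^k • g := by rw [smul_smul, ← pow_add, show k - j + j = k from by omega]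
    | zero => simp
    | add x y _ _ h1 h2 => rw [smul_add]; exact add_mem h1 h2
    | smul r z _ h => rw [smul_comm]; exact Submodule.smul_mem _ _ h
  · apply Nat.sInf_le
    show bpow k (Wsat a k) ≤ bpow k ⊤
    exact bpow_le' fun y _ => mem_bpow_of_eq trivial rfl


end
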